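/- The extended Lorentz cone L = {(x,u) ∈ ℝ^p × ℝ^q : x ≥ ‖u‖e} is a polyhedral cone (i.e., generated by finitely many vectors) if and only if q = 1. -/

import Mathlib

open scoped RealInnerProductSpace

/-- The extended Lorentz cone `L = {(x,u) ∈ ℝ^p × ℝ^q : x ≥ ‖u‖e}`. -/
def extendedLorentzCone (p q : ℕ) :
    Set (EuclideanSpace ℝ (Fin p) × EuclideanSpace ℝ (Fin q)) :=
  {z | ∀ i, ‖z.2‖ ≤ z.1 i}

/-- The cone generated by finitely many vectors `v¹,…,v^k`:
all nonnegative linear combinations `λ₁v¹ + … + λ_k v^k`. -/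
def coneGen {V : Type*} [AddCommMonoid V] [Module ℝ V] {k : ℕ}
    (v : Fin k → V) : Set V :=
  {z | ∃ lam : Fin k → ℝ, (∀ i, 0 ≤ lam i) ∧ z = ∑ i, lam i • v i}

lemma mem_coneGen_self {V : Type*} [AddCommMonoid V] [Module ℝ V] {k : ℕ}
    (v : Fin k → V) (j : Fin k) : v j ∈ coneGen v := by
  refine ⟨fun i => if i = j then 1 else 0, fun i => by dsimp only; split <;> norm_num, ?_⟩
  simp [ite_smul]

lemma norm_fin_one (u : EuclideanSpace ℝ (Fin 1)) : ‖u‖ = |u 0| := by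
  simp [EuclideanSpace.norm_eq, Fin.sum_univ_one, Real.sqrt_sq_eq_abs]

lemma coneGen_subset_lorentz {p q k : ℕ}
    (v : Fin k → EuclideanSpace ℝ (Fin p) × EuclideanSpace ℝ (Fin q))
    (h : ∀ j, v j ∈ extendedLorentzCone p q) :
    coneGen v ⊆ extendedLorentzCone p q := by
  rintro z ⟨lam, hlam, rfl⟩ i
  have hsnd : (∑ j, lam j • v j).2 = ∑ j, lam j • (v j).2 := by
    simp [Prod.snd_sum]
  have hfst : (∑ j, lam j • v j).1 i = ∑ j, lam j * (v j).1 i := by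
    rw [Prod.fst_sum, WithLp.ofLp_sum, Finset.sum_apply]
    rfl
  rw [hsnd, hfst]
  calc ‖∑ j, lam j • (v j).2‖ ≤ ∑ j, ‖lam j • (v j).2‖ := norm_sum_le _ _
    _ = ∑ j, lam j * ‖(v j).2‖ := by
        refine Finset.sum_congr rfl fun j _ => ?_
        rw [norm_smul, Real.norm_eq_abs, abs_of_nonneg (hlam j)]
    _ ≤ ∑ j, lam j * (v j).1 i :=
        Finset.sum_le_sum fun j _ => mul_le_mul_of_nonneg_left (h j i) (hlam j)

/-- The extended Lorentz cone is polyhedral (generated by finitely many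
vectors) if and only if `q = 1`. -/
theorem stmt3 (p q : ℕ) (hp : 0 < p) (hq : 0 < q) :
    (∃ (k : ℕ) (v : Fin k → EuclideanSpace ℝ (Fin p) × EuclideanSpace ℝ (Fin q)),
      extendedLorentzCone p q = coneGen v) ↔ q = 1 := by
  constructor
  · rintro ⟨k, v, hL⟩
    by_contra hq1
    have hq2 : 1 < q := by omega
    set i0 : Fin q := ⟨0, hq⟩ with hi0
    set i1 : Fin q := ⟨1, hq2⟩ with hi1
    have h01 : i1 ≠ i0 := by simp [hi0, hi1, Fin.ext_iff]
    set i0p : Fin p := ⟨0, hp⟩ with hi0p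
    set ones : EuclideanSpace ℝ (Fin p) := WithLp.toLp 2 (fun _ => 1) with hones
    set vs : ℝ → EuclideanSpace ℝ (Fin q) :=
      fun s => EuclideanSpace.single i0 1 + s • EuclideanSpace.single i1 1 with hvs
    have hvs0 : ∀ s, vs s i0 = 1 := by
      intro s
      simp [hvs, EuclideanSpace.single_apply, Ne.symm h01, h01]
    have hvs1 : ∀ s, vs s i1 = s := by
      intro s
      simp [hvs, EuclideanSpace.single_apply, Ne.symm h01, h01]
    have hvspos : ∀ s, 0 < ‖vs s‖ := by
      intro s
      rw [norm_pos_iff]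
      intro h0
      have := hvs0 s
      rw [h0] at this
      simp at this
    set w : ℝ → EuclideanSpace ℝ (Fin q) := fun s => ‖vs s‖⁻¹ • vs s with hw
    have hwnorm : ∀ s, ‖w s‖ = 1 := by
      intro s
      rw [hw]
      simp only [norm_smul, Real.norm_eq_abs, abs_inv, abs_of_nonneg (hvspos s).le]
      exact inv_mul_cancel₀ (hvspos s).ne'
    -- key claim
    have key : ∀ s : ℝ, ∃ j : Fin k, (v j).2 ≠ 0 ∧ (v j).2 = ‖(v j).2‖ • w s := by
      intro s
      have hmem : ((ones, w s) : EuclideanSpace ℝ (Fin p) × EuclideanSpace ℝ (Fin q))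
          ∈ extendedLorentzCone p q := by
        intro i
        simp [hwnorm s, hones]
      rw [hL] at hmem
      obtain ⟨lam, hlam, heq⟩ := hmem
      have hsnd : w s = ∑ j, lam j • (v j).2 := by
        have := congrArg Prod.snd heq
        simpa [Prod.snd_sum] using this
      have hfst : ∀ i, ones i = ∑ j, lam j * (v j).1 i := by
        intro i
        have := congrArg Prod.fst heq
        calc ones i = (∑ j, lam j • v j).1 i := by rw [← this]
          _ = ∑ j, lam j * (v j).1 i := by rw [Prod.fst_sum, WithLp.ofLp_sum, Finset.sum_apply]; rfl
      -- existence of j with lam j • (v j).2 ≠ 0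
      have hwne : w s ≠ 0 := by
        intro h0
        have := hwnorm s
        rw [h0] at this
        simp at this
      have hex : ∃ j ∈ Finset.univ, lam j • (v j).2 ≠ 0 := by
        by_contra hc
        push_neg at hc
        apply hwne
        rw [hsnd]
        exact Finset.sum_eq_zero fun j hj => hc j hj
      obtain ⟨j, -, hj⟩ := hex
      have hlamj : 0 < lam j := by
        rcases (hlam j).lt_or_eq with h | h
        · exact h
        · exact absurd (by rw [← h, zero_smul]) hj
      have hvj2 : (v j).2 ≠ 0 := fun h0 => hj (by rw [h0, smul_zero])
      -- every generator is in L
      have hgen : ∀ m, v m ∈ extendedLorentzCone p q := by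
        intro m
        rw [hL]
        exact mem_coneGen_self v m
      -- the functional
      have hinner : ⟪w s, w s⟫ = ∑ j, lam j * ⟪w s, (v j).2⟫ := by
        nth_rewrite 2 [hsnd]
        rw [inner_sum]
        exact Finset.sum_congr rfl fun m _ => real_inner_smul_right _ _ _
      have hfz : ∀ m, ⟪w s, (v m).2⟫ ≤ (v m).1 i0p := by
        intro m
        calc ⟪w s, (v m).2⟫ ≤ ‖w s‖ * ‖(v m).2‖ := real_inner_le_norm _ _
          _ = ‖(v m).2‖ := by rw [hwnorm s, one_mul]
          _ ≤ (v m).1 i0p := hgen m i0p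
      have hsum0 : ∑ m, lam m * ((v m).1 i0p - ⟪w s, (v m).2⟫) = 0 := by
        have h1 : ⟪w s, w s⟫ = 1 := by
          rw [real_inner_self_eq_norm_mul_norm, hwnorm s, one_mul]
        have h2 : ones i0p = 1 := rfl
        calc ∑ m, lam m * ((v m).1 i0p - ⟪w s, (v m).2⟫)
            = (∑ m, lam m * (v m).1 i0p) - ∑ m, lam m * ⟪w s, (v m).2⟫ := by
              rw [← Finset.sum_sub_distrib]
              exact Finset.sum_congr rfl fun m _ => by ring
          _ = 1 - 1 := by rw [← hfst i0p, ← hinner, h2, h1]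
          _ = 0 := by ring
      have heach : ∀ m ∈ Finset.univ, lam m * ((v m).1 i0p - ⟪w s, (v m).2⟫) = 0 := by
        rw [← Finset.sum_eq_zero_iff_of_nonneg]
        · exact hsum0
        · intro m _
          exact mul_nonneg (hlam m) (sub_nonneg.mpr (hfz m))
      have hj0 : (v j).1 i0p - ⟪w s, (v j).2⟫ = 0 := by
        have := heach j (Finset.mem_univ j)
        rcases mul_eq_zero.mp this with h | h
        · exact absurd h hlamj.ne'
        · exact h
      have hinner_eq : ⟪w s, (v j).2⟫ = ‖w s‖ * ‖(v j).2‖ := by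
        rw [hwnorm s, one_mul]
        have h1 : ⟪w s, (v j).2⟫ ≤ ‖(v j).2‖ := by
          calc ⟪w s, (v j).2⟫ ≤ ‖w s‖ * ‖(v j).2‖ := real_inner_le_norm _ _
            _ = ‖(v j).2‖ := by rw [hwnorm s, one_mul]
        have h2 : ‖(v j).2‖ ≤ ⟪w s, (v j).2⟫ := by
          have := hgen j i0p
          linarith [sub_eq_zero.mp hj0]
        linarith
      have := inner_eq_norm_mul_iff_real.mp hinner_eq
      rw [hwnorm s, one_smul] at this
      exact ⟨j, hvj2, this.symm⟩
    -- build injection ℝ → Fin k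
    set F : ℝ → Fin k := fun s => (key s).choose with hF
    have hFspec : ∀ s, (v (F s)).2 ≠ 0 ∧ (v (F s)).2 = ‖(v (F s)).2‖ • w s :=
      fun s => (key s).choose_spec
    have hFinj : Function.Injective F := by
      intro s s' hss
      have h1 := hFspec s
      have h2 := hFspec s'
      rw [hss] at h1
      have hne := h2.1
      have heq : ‖(v (F s')).2‖ • w s = ‖(v (F s')).2‖ • w s' := by
        rw [← h1.2, ← h2.2]
      have hnorm_ne : ‖(v (F s')).2‖ ≠ 0 := norm_ne_zero_iff.mpr hne
      have hww : w s = w s' := smul_right_injective _ hnorm_ne heq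
      -- deduce s = s'
      have e0 : ‖vs s‖⁻¹ * 1 = ‖vs s'‖⁻¹ * 1 := by
        have := congrFun (congrArg (fun (z : EuclideanSpace ℝ (Fin q)) => (z : Fin q → ℝ)) hww) i0
        simpa [hw, hvs0] using this
      have e1 : ‖vs s‖⁻¹ * s = ‖vs s'‖⁻¹ * s' := by
        have := congrFun (congrArg (fun (z : EuclideanSpace ℝ (Fin q)) => (z : Fin q → ℝ)) hww) i1
        simpa [hw, hvs1] using this
      have hn : ‖vs s‖ = ‖vs s'‖ := by
        have : ‖vs s‖⁻¹ = ‖vs s'‖⁻¹ := by simpa using e0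
        exact inv_injective this
      rw [hn] at e1
      exact mul_left_cancel₀ (inv_ne_zero (hvspos s').ne') e1
    haveI : Finite ℝ := Finite.of_injective F hFinj
    exact not_finite ℝ
  · rintro rfl
    set ones : EuclideanSpace ℝ (Fin p) := WithLp.toLp 2 (fun _ => 1) with hones
    set E1 : EuclideanSpace ℝ (Fin 1) := EuclideanSpace.single 0 1 with hE1
    have hE1norm : ‖E1‖ = 1 := by simp [hE1]
    set v : Fin (p + 2) → EuclideanSpace ℝ (Fin p) × EuclideanSpace ℝ (Fin 1) :=
      Fin.append (fun i => (EuclideanSpace.single i 1, 0)) ![(ones, E1), (ones, -E1)] with hv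
    refine ⟨p + 2, v, ?_⟩
    have hgen : ∀ j, v j ∈ extendedLorentzCone p 1 := by
      intro j
      refine Fin.addCases (fun i => ?_) (fun i => ?_) j
      · intro m
        rw [hv, Fin.append_left]
        simp only [norm_zero]
        simp [EuclideanSpace.single_apply]
        positivity
      · fin_cases i <;>
        · intro m
          rw [hv, Fin.append_right]
          simp [hE1norm, hones]
    refine Set.Subset.antisymm ?_ (coneGen_subset_lorentz v hgen)
    rintro ⟨x, u⟩ hz
    set a : ℝ := u 0 with ha
    have habs : ‖u‖ = |a| := norm_fin_one u
    set lam : Fin (p + 2) → ℝ :=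
      Fin.append (fun i => x i - |a|) ![max a 0, max (-a) 0] with hlam
    refine ⟨lam, ?_, ?_⟩
    · intro j
      refine Fin.addCases (fun i => ?_) (fun i => ?_) j
      · rw [hlam, Fin.append_left]
        have := hz i
        rw [habs] at this
        linarith
      · fin_cases i <;> · rw [hlam, Fin.append_right]; simp [le_max_right]
    · rw [Fin.sum_univ_add]
      simp only [hlam, hv, Fin.append_left, Fin.append_right]
      rw [Fin.sum_univ_two]
      simp only [Matrix.cons_val_zero, Matrix.cons_val_one, Matrix.head_cons]
      have hmax1 : max a 0 + max (-a) 0 = |a| := max_zero_add_max_neg_zero_eq_abs_self a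
      have hmax2 : max a 0 - max (-a) 0 = a := by
        rcases le_total a 0 with h | h
        · rw [max_eq_right h, max_eq_left (neg_nonneg.mpr h)]; ring
        · rw [max_eq_left h, max_eq_right (neg_nonpos.mpr h)]; ring
      refine Prod.ext ?_ ?_
      · simp only [Prod.fst_sum, Prod.smul_fst, Prod.fst_add]
        ext m
        rw [PiLp.add_apply, WithLp.ofLp_sum, Finset.sum_apply, PiLp.add_apply, PiLp.smul_apply, PiLp.smul_apply]
        simp only [PiLp.smul_apply, smul_eq_mul, EuclideanSpace.single_apply, mul_ite, mul_one,
          mul_zero, Finset.sum_ite_eq, Finset.mem_univ, if_true, hones, WithLp.ofLp_toLp]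
        linarith [hmax1]
      · simp only [Prod.snd_sum, Prod.smul_snd, Prod.snd_add]
        rw [show (∑ i : Fin p, (x i - |a|) • (0 : EuclideanSpace ℝ (Fin 1))) = 0 by simp,
          zero_add]
        ext m
        fin_cases m
        rw [PiLp.add_apply, PiLp.smul_apply, PiLp.smul_apply, PiLp.neg_apply]
        simp only [hE1, EuclideanSpace.single_apply, if_true, smul_eq_mul]
        norm_num
        show u 0 = a ⊔ 0 + -(-a ⊔ 0)
        rw [← ha]
        linarith [hmax2]
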